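/- Let B be a measurable space of paths with a probability measure P_W, and let μ₁ : B → [0,∞) be measurable with μ_max = sup_{x ∈ B} μ₁[x] < ∞. Define, for g > 0, A[x; g] ∈ [0,∞] with the properties: A[x; g] ≤ exp(gT/(1 − 2gμ₁[x])) whenever 2gμ₁[x] < 1, and A[x; g] = +∞ whenever 2gμ₁[x] ≥ 1. Suppose further that for every ε > 0 the set {x ∈ B : μ₁[x] ≥ μ_max − ε} has strictly positive P_W-measure. Then g_c := inf{ g > 0 : ∫_B A[x; g] dP_W(x) = +∞ } equals 1/(2 μ_max). -/

import Mathlib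

open MeasureTheory ENNReal Filter

/-- Abstract skeleton of Proposition 1: the critical coupling above which the
averaged amplification diverges equals `1/(2 μ_max)`. -/
theorem stmt9 {B : Type*} [MeasurableSpace B] (PW : Measure B)
    [IsProbabilityMeasure PW] (T : ℝ) (hT : 0 < T)
    (μ₁ : B → ℝ) (hμ₁meas : Measurable μ₁) (hμ₁pos : ∀ x, 0 ≤ μ₁ x)
    (μmax : ℝ) (hμmax : IsLUB (Set.range μ₁) μmax) (hμmaxpos : 0 < μmax)
    (A : B → ℝ → ℝ≥0∞)
    (hAmono : ∀ x, Monotone (A x))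
    (hAfin : ∀ x g, 0 < g → 2 * g * μ₁ x < 1 →
      A x g ≤ ENNReal.ofReal (Real.exp (g * T / (1 - 2 * g * μ₁ x))))
    (hAinf : ∀ x g, 0 < g → 1 ≤ 2 * g * μ₁ x → A x g = ⊤)
    (hnearmax : ∀ ε : ℝ, 0 < ε → 0 < PW {x | μmax - ε ≤ μ₁ x}) :
    sInf {g : ℝ | 0 < g ∧ ∫⁻ x, A x g ∂PW = ⊤} = 1 / (2 * μmax) := by

  set S := {g : ℝ | 0 < g ∧ ∫⁻ x, A x g ∂PW = ⊤} with hS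
  have hgc : (0:ℝ) < 1 / (2 * μmax) := by positivity
  have hle : ∀ x, μ₁ x ≤ μmax := fun x => hμmax.1 ⟨x, rfl⟩
  have memS : ∀ g, 1 / (2 * μmax) < g → g ∈ S := by
    intro g hg
    have hg0 : 0 < g := lt_trans hgc hg
    have h1 : 1 < 2 * g * μmax := by
      rw [div_lt_iff₀ (by positivity)] at hg
      nlinarith
    have hε : 0 < μmax - 1 / (2 * g) := by
      have : 1 / (2 * g) < μmax := by
        rw [div_lt_iff₀ (by positivity)]
        nlinarith
      linarith
    refine ⟨hg0, ?_⟩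
    set s : Set B := {x | μmax - (μmax - 1 / (2 * g)) ≤ μ₁ x} with hsdef
    have hsmeas : MeasurableSet s := measurableSet_le measurable_const hμ₁meas
    have hspos : 0 < PW s := hnearmax _ hε
    have hAeq : ∀ x ∈ s, A x g = ⊤ := by
      intro x hx
      apply hAinf x g hg0
      have hx' : 1 / (2 * g) ≤ μ₁ x := by
        have := hx
        simp only [hsdef, Set.mem_setOf_eq] at this
        linarith
      rw [div_le_iff₀ (by positivity)] at hx'
      nlinarith
    have htop : ∫⁻ x in s, A x g ∂PW = ⊤ := by
      rw [setLIntegral_congr_fun hsmeas (fun x hx => hAeq x hx)]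
      simp [ENNReal.top_mul hspos.ne', hspos.ne']
    exact eq_top_iff.mpr (htop ▸ setLIntegral_le_lintegral s _)
  have hub : ∀ g ∈ S, 1 / (2 * μmax) ≤ g := by
    intro g hgS
    by_contra h
    push_neg at h
    have hg0 : 0 < g := hgS.1
    have hlt : 2 * g * μmax < 1 := by
      rw [lt_div_iff₀ (by positivity)] at h
      nlinarith
    set C := ENNReal.ofReal (Real.exp (g * T / (1 - 2 * g * μmax))) with hC
    have hbound : ∀ x, A x g ≤ C := by
      intro x
      have h1 : 2 * g * μ₁ x ≤ 2 * g * μmax := by nlinarith [hle x]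
      refine (hAfin x g hg0 (lt_of_le_of_lt h1 hlt)).trans ?_
      apply ENNReal.ofReal_le_ofReal
      apply Real.exp_le_exp.mpr
      gcongr <;> nlinarith [hle x, hμ₁pos x, mul_pos hg0 hT]
    have hfin : ∫⁻ x, A x g ∂PW ≤ C := by
      calc ∫⁻ x, A x g ∂PW ≤ ∫⁻ _, C ∂PW := lintegral_mono hbound
      _ = C := by simp
    exact absurd hgS.2 (ne_top_of_le_ne_top ENNReal.ofReal_ne_top hfin)
  have hbdd : BddBelow S := ⟨1 / (2 * μmax), hub⟩
  refine le_antisymm ?_ (le_csInf ⟨1 / (2 * μmax) + 1, memS _ (by linarith)⟩ hub)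
  refine le_of_forall_pos_le_add fun ε hε => ?_
  exact csInf_le hbdd (memS _ (by linarith))
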